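/- Every housing market with partially ordered preferences admits an allocation in its core; in particular, the variant of the Top Trading Cycles algorithm that iteratively selects a cycle in the graph of undominated choices, removes its agents, and repeats, outputs a core allocation. -/

import Mathlib

/-- A housing market: each agent `a` has a strict partial order `pref a` on agents,
where `pref a b c` means `a` prefers the house of `c` to the house of `b` (i.e. `b ≺_a c`). -/
structure HousingMarket (N : Type) where
  pref : N → N → N → Prop
  irrefl : ∀ a b, ¬ pref a b b
  trans : ∀ a b c d, pref a b c → pref a c d → pref a b d

variable {N : Type} [Fintype N] [DecidableEq N]

/-- `(a,b)` is an arc of the acceptability graph `G^H` (including all loops). -/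
def accepts (H : HousingMarket N) (a b : N) : Prop := a = b ∨ H.pref a a b

/-- An allocation: a permutation of the agents all of whose arcs are acceptable. -/
def IsAllocation (H : HousingMarket N) (X : N → N) : Prop :=
  Function.Bijective X ∧ ∀ a, accepts H a (X a)

/-- A blocking cycle for `X`: a directed cycle of the acceptability graph (given as a
nonempty duplicate-free list, with successor `c.next`) on which every agent strictly
prefers the house of her successor to the house she gets in `X`. -/
def IsBlockingCycle (H : HousingMarket N) (X : N → N) (c : List N) : Prop :=
  c ≠ [] ∧ c.Nodup ∧
    ∀ (a : N) (h : a ∈ c), accepts H a (c.next a h) ∧ H.pref a (X a) (c.next a h)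

/-- `X` is in the core of `H`. -/
def InCore (H : HousingMarket N) (X : N → N) : Prop :=
  IsAllocation H X ∧ ∀ c : List N, ¬ IsBlockingCycle H X c

/-- A digraph (given by its arc relation `R`) has a directed cycle. -/
def HasCycle (R : N → N → Prop) : Prop :=
  ∃ c : List N, c ≠ [] ∧ c.Nodup ∧ ∀ (a : N) (h : a ∈ c), R a (c.next a h)

/-- Preferences of every agent are strict total orders on her acceptable set. -/
def StrictPrefs (H : HousingMarket N) : Prop :=
  ∀ a b c, accepts H a b → accepts H a c → b ≠ c → H.pref a b c ∨ H.pref a c b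

/-- `H'` is a `(p,q)`-improvement of `H`: only `q`'s preferences change, they agree
on `N \ {p}`, and the value of `p`'s house weakly rises for `q`. -/
def IsPQImprovement (H H' : HousingMarket N) (p q : N) : Prop :=
  (∀ a, a ≠ q → H.pref a = H'.pref a) ∧
  (∀ a b, a ≠ p → b ≠ p → (H.pref q a b ↔ H'.pref q a b)) ∧
  (∀ a, H.pref q a p → H'.pref q a p)

/-- `H'` is a `p`-improvement of `H`: a finite composition of `(p,q)`-improvements. -/
def IsPImprovement (H H' : HousingMarket N) (p : N) : Prop :=
  Relation.ReflTransGen (fun K K' => ∃ q, IsPQImprovement K K' p q) H H'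

set_option linter.unusedSectionVars false

lemma exists_max (H : HousingMarket N) (a : N) :
    ∀ s : Finset N, s.Nonempty → ∃ b ∈ s, ∀ c ∈ s, ¬ H.pref a b c := by
  intro s
  induction s using Finset.induction with
  | empty => rintro ⟨x, hx⟩; simp at hx
  | @insert x s hx ih =>
    intro _
    rcases s.eq_empty_or_nonempty with rfl | hs'
    · exact ⟨x, by simp, by simpa using H.irrefl a x⟩
    · obtain ⟨b, hb, hmax⟩ := ih hs'
      by_cases hbx : H.pref a b x
      · refine ⟨x, Finset.mem_insert_self _ _, ?_⟩
        intro c hc hp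
        rcases Finset.mem_insert.mp hc with rfl | hc
        · exact H.irrefl a c hp
        · exact hmax c hc (H.trans a b x c hbx hp)
      · refine ⟨b, Finset.mem_insert_of_mem hb, ?_⟩
        intro c hc
        rcases Finset.mem_insert.mp hc with rfl | hc
        · exact hbx
        · exact hmax c hc

theorem List.next_get {α : Type*} [DecidableEq α] (l : List α) (h : l.Nodup) (i : Fin l.length) :
    l.next (l.get i) (List.get_mem _ _) =
      l.get ⟨(i + 1) % l.length, Nat.mod_lt _ (i.1.zero_le.trans_lt i.2)⟩ :=
  List.next_getElem l h i.1 i.2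

lemma next_injOn (l : List N) (hnd : l.Nodup) (a b : N) (ha : a ∈ l) (hb : b ∈ l)
    (h : l.next a ha = l.next b hb) : a = b := by
  obtain ⟨i, rfl⟩ := List.get_of_mem ha
  obtain ⟨j, rfl⟩ := List.get_of_mem hb
  rw [List.next_get l hnd i, List.next_get l hnd j] at h
  have hij := List.nodup_iff_injective_get.mp hnd h
  have h1 : ((i : ℕ) + 1) % l.length = ((j : ℕ) + 1) % l.length := congrArg Fin.val hij
  congr 1
  have hi := i.2; have hj := j.2
  ext
  rcases Nat.lt_or_ge ((i:ℕ)+1) l.length with h2 | h2 <;>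
    rcases Nat.lt_or_ge ((j:ℕ)+1) l.length with h3 | h3
  · rw [Nat.mod_eq_of_lt h2, Nat.mod_eq_of_lt h3] at h1; omega
  · have : (j:ℕ)+1 = l.length := by omega
    rw [Nat.mod_eq_of_lt h2, this, Nat.mod_self] at h1; omega
  · have : (i:ℕ)+1 = l.length := by omega
    rw [Nat.mod_eq_of_lt h3, this, Nat.mod_self] at h1; omega
  · omega

lemma exists_fcycle (f : N → N) (W : Finset N) (hW : W.Nonempty) (hf : ∀ a ∈ W, f a ∈ W) :
    ∃ c : List N, c ≠ [] ∧ c.Nodup ∧ (∀ a ∈ c, a ∈ W) ∧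
      ∀ (a : N) (h : a ∈ c), c.next a h = f a := by
  classical
  obtain ⟨a0, ha0⟩ := hW
  have horb : ∀ n, f^[n] a0 ∈ W := by
    intro n
    induction n with
    | zero => exact ha0
    | succ n ih => rw [Function.iterate_succ_apply']; exact hf _ ih
  obtain ⟨i, j, hij, heq⟩ := Fintype.exists_ne_map_eq_of_card_lt
    (fun n : Fin (Fintype.card N + 1) => f^[(n : ℕ)] a0) (by simp)
  wlog hlt : (i : ℕ) < (j : ℕ) generalizing i j
  · exact this j i hij.symm heq.symm (by omega)
  set x := f^[(i : ℕ)] a0 with hxdef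
  have hfix : f^[(j : ℕ) - (i : ℕ)] x = x := by
    rw [hxdef, ← Function.iterate_add_apply, Nat.sub_add_cancel hlt.le, ← heq]
  have hP : ∃ m, 0 < m ∧ f^[m] x = x := ⟨(j : ℕ) - (i : ℕ), by omega, hfix⟩
  set m := Nat.find hP with hmdef
  obtain ⟨hm0, hmx⟩ := Nat.find_spec hP
  set c : List N := (List.range m).map (fun k => f^[k] x) with hcdef
  have hclen : c.length = m := by simp [hcdef]
  have hgetc : ∀ (k : ℕ) (hk : k < c.length), c.get ⟨k, hk⟩ = f^[k] x := by
    intro k hk; simp [hcdef]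
  have horbx : ∀ n, f^[n] x ∈ W := by
    intro n; rw [hxdef, ← Function.iterate_add_apply]; exact horb _
  have hinj : ∀ k l : ℕ, k < m → l < m → f^[k] x = f^[l] x → k = l := by
    have key : ∀ k l : ℕ, k < l → l < m → f^[k] x = f^[l] x → False := by
      intro k l hkl hlm he
      have h1 : f^[m - l + l] x = x := by rw [Nat.sub_add_cancel hlm.le]; exact hmx
      have h2 : f^[m - l + k] x = x := by
        rw [Function.iterate_add_apply, he, ← Function.iterate_add_apply]; exact h1
      exact Nat.find_min hP (m := m - l + k) (by omega) ⟨by omega, h2⟩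
    intro k l hk hl he
    rcases Nat.lt_trichotomy k l with h | h | h
    · exact absurd (key k l h hl he) (by simp)
    · exact h
    · exact absurd (key l k h hk he.symm) (by simp)
  have hnd : c.Nodup := by
    rw [hcdef, List.nodup_map_iff_inj_on (List.nodup_range (n := m))]
    intro k hk l hl he
    exact hinj k l (List.mem_range.mp hk) (List.mem_range.mp hl) he
  refine ⟨c, ?_, hnd, ?_, ?_⟩
  · intro h0; rw [← List.length_eq_zero_iff] at h0; omega
  · intro a ha
    obtain ⟨k, _, rfl⟩ := List.mem_map.mp ha
    exact horbx k
  · intro a ha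
    obtain ⟨fi, rfl⟩ := List.get_of_mem ha
    obtain ⟨k, hk⟩ := fi
    rw [List.next_get c hnd ⟨k, hk⟩]
    rw [hgetc _ (Nat.mod_lt _ (by omega)), hgetc k hk]
    have hfi : k < m := by rw [← hclen]; exact hk
    show f^[(k + 1) % c.length] x = f (f^[k] x)
    rcases Nat.lt_or_ge (k + 1) m with h2 | h2
    · rw [hclen, Nat.mod_eq_of_lt h2, Function.iterate_succ_apply']
    · have h3 : k + 1 = m := by omega
      rw [hclen, h3, Nat.mod_self]
      have h4 : f^[m] x = x := hmx
      rw [← h3, Function.iterate_succ_apply'] at h4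
      simpa using h4.symm

lemma core_aux (H : HousingMarket N) :
    ∀ n (W : Finset N), W.card ≤ n → ∃ X : N → N,
      (∀ a, a ∉ W → X a = a) ∧ Function.Bijective X ∧ (∀ a, accepts H a (X a)) ∧
      ∀ c : List N, c ≠ [] → (∀ a ∈ c, a ∈ W) →
        ¬ (∀ (a : N) (h : a ∈ c), H.pref a (X a) (c.next a h)) := by
  intro n
  induction n with
  | zero =>
    intro W hW
    have hWe : W = ∅ := Finset.card_eq_zero.mp (Nat.le_zero.mp hW)
    subst hWe
    refine ⟨id, fun a _ => rfl, Function.bijective_id, fun a => Or.inl rfl, ?_⟩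
    intro c hc hcW _
    obtain ⟨a, ha⟩ := List.exists_mem_of_ne_nil c hc
    simpa using hcW a ha
  | succ n ih =>
    intro W hW
    classical
    rcases W.eq_empty_or_nonempty with rfl | hWne
    · exact ih ∅ (by simp)
    -- build the undominated-choice function f
    have h1 : ∀ a : N, ∃ b : N, a ∈ W → b ∈ W ∧ accepts H a b ∧ ∀ d ∈ W, ¬ H.pref a b d := by
      intro a
      by_cases haW : a ∈ W
      · obtain ⟨b, hb, hbmax⟩ := exists_max H a (W.filter fun b => accepts H a b)
          ⟨a, Finset.mem_filter.mpr ⟨haW, Or.inl rfl⟩⟩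
        rw [Finset.mem_filter] at hb
        refine ⟨b, fun _ => ⟨hb.1, hb.2, ?_⟩⟩
        intro d hd hpd
        have hacc : accepts H a d := by
          rcases hb.2 with rfl | hab
          · exact Or.inr hpd
          · exact Or.inr (H.trans a a b d hab hpd)
        exact hbmax d (Finset.mem_filter.mpr ⟨hd, hacc⟩) hpd
      · exact ⟨a, fun h => absurd h haW⟩
    choose f hf using h1
    obtain ⟨K, hKne, hKnd, hKW, hKnext⟩ := exists_fcycle f W hWne
      (fun a ha => (hf a ha).1)
    set W' := W \ K.toFinset with hW'def
    have hKsub : K.toFinset ⊆ W := fun a ha => hKW a (List.mem_toFinset.mp ha)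
    have hW'card : W'.card ≤ n := by
      have hKcard : 0 < K.toFinset.card := by
        obtain ⟨a, ha⟩ := List.exists_mem_of_ne_nil K hKne
        exact Finset.card_pos.mpr ⟨a, List.mem_toFinset.mpr ha⟩
      have h2 : W'.card = W.card - K.toFinset.card := by
        rw [hW'def]; exact Finset.card_sdiff_of_subset hKsub
      omega
    obtain ⟨X', hX'id, hX'bij, hX'acc, hX'core⟩ := ih W' hW'card
    have hW'K : ∀ a, a ∈ W' → a ∉ K := by
      intro a ha
      rw [hW'def, Finset.mem_sdiff] at ha
      exact fun h => ha.2 (List.mem_toFinset.mpr h)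
    set X : N → N := fun a => if h : a ∈ K then K.next a h else X' a with hXdef
    have hXK : ∀ a (h : a ∈ K), X a = K.next a h := by
      intro a h; simp [hXdef, h]
    have hXnK : ∀ a, a ∉ K → X a = X' a := by
      intro a h; simp [hXdef, h]
    have hX'W' : ∀ a, a ∈ W' → X' a ∈ W' := by
      intro a ha
      by_contra hcon
      have h2 : X' (X' a) = X' a := hX'id _ hcon
      have := hX'bij.1 h2
      rw [this] at hcon
      exact hcon ha
    have hcomp : ∀ a, a ∉ K → X a ∉ K := by
      intro a ha
      rw [hXnK a ha]
      by_cases haW' : a ∈ W'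
      · exact hW'K _ (hX'W' a haW')
      · rw [hX'id a haW']
        exact ha
    have hXinj : Function.Injective X := by
      intro a b heq
      by_cases haK : a ∈ K <;> by_cases hbK : b ∈ K
      · rw [hXK a haK, hXK b hbK] at heq
        exact next_injOn K hKnd a b haK hbK heq
      · exfalso
        rw [hXK a haK] at heq
        exact hcomp b hbK (heq ▸ List.next_mem _ _ _)
      · exfalso
        rw [hXK b hbK] at heq
        exact hcomp a haK (heq.symm ▸ List.next_mem _ _ _)
      · rw [hXnK a haK, hXnK b hbK] at heq
        exact hX'bij.1 heq
    refine ⟨X, ?_, Finite.injective_iff_bijective.mp hXinj, ?_, ?_⟩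
    · intro a ha
      have haK : a ∉ K := fun h => ha (hKW a h)
      rw [hXnK a haK, hX'id a (by rw [hW'def, Finset.mem_sdiff]; exact fun h => ha h.1)]
    · intro a
      by_cases haK : a ∈ K
      · rw [hXK a haK, hKnext a haK]
        exact (hf a (hKW a haK)).2.1
      · rw [hXnK a haK]
        exact hX'acc a
    · intro c hcne hcW hall
      by_cases hint : ∃ a, a ∈ c ∧ a ∈ K
      · obtain ⟨a, hac, haK⟩ := hint
        have h1 := hall a hac
        rw [hXK a haK, hKnext a haK] at h1
        exact (hf a (hKW a haK)).2.2 (c.next a hac) (hcW _ (List.next_mem _ _ _)) h1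
      · push_neg at hint
        refine hX'core c hcne ?_ ?_
        · intro a ha
          rw [hW'def, Finset.mem_sdiff]
          exact ⟨hcW a ha, fun h => hint a ha (List.mem_toFinset.mp h)⟩
        · intro a ha
          rw [← hXnK a (hint a ha)]
          exact hall a ha


/-- every housing market with partially ordered preferences admits an
allocation in its core (e.g. the output of the TTC variant for partial orders). -/
theorem stmt2 (H : HousingMarket N) : ∃ X : N → N, InCore H X := by
  obtain ⟨X, _, hbij, hacc, hcore⟩ := core_aux H Finset.univ.card Finset.univ le_rfl
  refine ⟨X, ⟨hbij, hacc⟩, ?_⟩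
  rintro c ⟨hne, _, hblk⟩
  exact hcore c hne (fun a _ => Finset.mem_univ a) (fun a h => (hblk a h).2)
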